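/- Let R be a commutative ring with unity, k ∈ ℕ, and I ⊊ R an ideal which satisfies the unital set condition. Then the reduction map SL_k(R) → SL_k(R/I) is surjective. -/

import Mathlib

open Matrix

/-- An ideal `I` of a commutative ring `R` satisfies the unital set condition (USC) if for
every `k ≥ 2` and every unital tuple `a_1, …, a_k` (i.e. `(a_1) + ⋯ + (a_k) = R`) there
exists `b` in the ideal `(a_2, …, a_k)` such that `a_1 + b` is a unit modulo `I`. -/
def UnitalSetCondition {R : Type*} [CommRing R] (I : Ideal R) : Prop :=
  ∀ k : ℕ, ∀ _ : 2 ≤ k, ∀ a : Fin k → R, (∑ i, Ideal.span {a i} = ⊤) →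
    ∃ b ∈ Ideal.span (a '' {i | (i : ℕ) ≠ 0}),
      IsUnit (Ideal.Quotient.mk I (a ⟨0, by omega⟩ + b))

namespace SLSurjAux

variable {S : Type*} [CommRing S] {k : ℕ}

/-- Lower shear: identity plus a vector in column 0 below the diagonal. -/
def Lm (v : Fin k → S) : Matrix (Fin (k + 1)) (Fin (k + 1)) S :=
  fun i j => if i = j then 1 else if j = 0 then (Fin.cases 0 v i : S) else 0

/-- Upper shear: identity plus a vector in row 0 right of the diagonal. -/
def Um (v : Fin k → S) : Matrix (Fin (k + 1)) (Fin (k + 1)) S :=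
  fun i j => if i = j then 1 else if i = 0 then (Fin.cases 0 v j : S) else 0

lemma mul_Lm_zero (M : Matrix (Fin (k + 1)) (Fin (k + 1)) S) (v : Fin k → S) (i : Fin (k + 1)) :
    (M * Lm v) i 0 = M i 0 + ∑ p, v p * M i p.succ := by
  rw [Matrix.mul_apply, Fin.sum_univ_succ]
  simp [Lm, Fin.succ_ne_zero, mul_comm]

lemma Lm_mul_zero (M : Matrix (Fin (k + 1)) (Fin (k + 1)) S) (v : Fin k → S) (j : Fin (k + 1)) :
    (Lm v * M) 0 j = M 0 j := by
  rw [Matrix.mul_apply]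
  simp [Lm, ite_mul, Finset.sum_ite_eq, eq_comm]

lemma Lm_mul_succ (M : Matrix (Fin (k + 1)) (Fin (k + 1)) S) (v : Fin k → S) (p : Fin k)
    (j : Fin (k + 1)) :
    (Lm v * M) p.succ j = M p.succ j + v p * M 0 j := by
  rw [Matrix.mul_apply, Fin.sum_univ_succ]
  simp [Lm, Fin.succ_ne_zero, Fin.succ_inj, ite_mul, Finset.sum_ite_eq]
  ring

lemma Um_mul_zero (M : Matrix (Fin (k + 1)) (Fin (k + 1)) S) (v : Fin k → S) (j : Fin (k + 1)) :
    (Um v * M) 0 j = M 0 j + ∑ p, v p * M p.succ j := by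
  rw [Matrix.mul_apply, Fin.sum_univ_succ]
  simp [Um, (Fin.succ_ne_zero _).symm, eq_comm (a := (0 : Fin (k+1)))]

lemma Um_mul_succ (M : Matrix (Fin (k + 1)) (Fin (k + 1)) S) (v : Fin k → S) (p : Fin k)
    (j : Fin (k + 1)) :
    (Um v * M) p.succ j = M p.succ j := by
  rw [Matrix.mul_apply]
  simp [Um, Fin.succ_ne_zero, ite_mul, Finset.sum_ite_eq]

lemma mul_Um_zero (M : Matrix (Fin (k + 1)) (Fin (k + 1)) S) (v : Fin k → S) (i : Fin (k + 1)) :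
    (M * Um v) i 0 = M i 0 := by
  rw [Matrix.mul_apply]
  simp [Um, mul_ite, Finset.sum_ite_eq', eq_comm]

lemma mul_Um_succ (M : Matrix (Fin (k + 1)) (Fin (k + 1)) S) (v : Fin k → S) (i : Fin (k + 1))
    (p : Fin k) :
    (M * Um v) i p.succ = M i p.succ + M i 0 * v p := by
  rw [Matrix.mul_apply, Fin.sum_univ_succ]
  simp [Um, (Fin.succ_ne_zero _).symm, Fin.succ_ne_zero, Fin.succ_inj, mul_ite,
    Finset.sum_ite_eq']
  ring

lemma det_Lm (v : Fin k → S) : (Lm v).det = 1 := by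
  rw [Matrix.det_of_lowerTriangular (Lm v) ?_]
  · simp [Lm]
  · intro i j hij
    have hij' : i < j := hij
    have h1 : i ≠ j := ne_of_lt hij'
    have h2 : j ≠ 0 := by
      intro h; subst h; exact (Fin.not_lt_zero i) hij'
    simp [Lm, h1, h2]

lemma det_Um (v : Fin k → S) : (Um v).det = 1 := by
  rw [Matrix.det_of_upperTriangular (M := Um v) ?_]
  · simp [Um]
  · intro i j hij
    have hij' : (j : Fin (k+1)) < i := hij
    have h1 : i ≠ j := (ne_of_lt hij').symm
    have h2 : i ≠ 0 := by
      intro h; subst h; exact (Fin.not_lt_zero j) hij'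
    simp [Um, h1, h2]

variable {S' : Type*} [CommRing S']

lemma map_Lm (f : S →+* S') (v : Fin k → S) : (Lm v).map f = Lm (f ∘ v) := by
  ext i j
  rcases Fin.eq_zero_or_eq_succ i with rfl | ⟨p, rfl⟩ <;>
    simp [Lm, apply_ite f]

lemma map_Um (f : S →+* S') (v : Fin k → S) : (Um v).map f = Um (f ∘ v) := by
  ext i j
  rcases Fin.eq_zero_or_eq_succ j with rfl | ⟨p, rfl⟩ <;>
    simp [Um, apply_ite f]

variable {R : Type*} [CommRing R] {n : ℕ} (I : Ideal R)

/-- `M` over `R/I` lifts to a determinant-one matrix over `R`. -/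
def Lifts (M : Matrix (Fin n) (Fin n) (R ⧸ I)) : Prop :=
  ∃ N : Matrix (Fin n) (Fin n) R, N.det = 1 ∧ N.map (Ideal.Quotient.mk I) = M

variable {I}

lemma lifts_of_mul_right {M T : Matrix (Fin n) (Fin n) (R ⧸ I)} (h1 : Lifts I (M * T))
    (h2 : Lifts I T) : Lifts I M := by
  obtain ⟨N₁, d₁, m₁⟩ := h1
  obtain ⟨N₂, d₂, m₂⟩ := h2
  have hdetT : T.det = 1 := by
    rw [← m₂, ← RingHom.mapMatrix_apply, ← RingHom.map_det, d₂, _root_.map_one]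
  refine ⟨N₁ * N₂.adjugate, ?_, ?_⟩
  · rw [Matrix.det_mul, d₁, Matrix.det_adjugate, d₂, one_pow, one_mul]
  · rw [Matrix.map_mul, m₁, ← RingHom.mapMatrix_apply, RingHom.map_adjugate,
      RingHom.mapMatrix_apply, m₂, mul_assoc, Matrix.mul_adjugate, hdetT, one_smul, mul_one]

lemma lifts_of_mul_left {M T : Matrix (Fin n) (Fin n) (R ⧸ I)} (h1 : Lifts I (T * M))
    (h2 : Lifts I T) : Lifts I M := by
  obtain ⟨N₁, d₁, m₁⟩ := h1
  obtain ⟨N₂, d₂, m₂⟩ := h2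
  have hdetT : T.det = 1 := by
    rw [← m₂, ← RingHom.mapMatrix_apply, ← RingHom.map_det, d₂, _root_.map_one]
  refine ⟨N₂.adjugate * N₁, ?_, ?_⟩
  · rw [Matrix.det_mul, d₁, Matrix.det_adjugate, d₂, one_pow, one_mul]
  · rw [Matrix.map_mul, m₁, ← RingHom.mapMatrix_apply, RingHom.map_adjugate,
      RingHom.mapMatrix_apply, m₂, ← mul_assoc, Matrix.adjugate_mul, hdetT, one_smul, one_mul]

lemma lifts_Lm {k : ℕ} (v : Fin k → R ⧸ I) : Lifts I (Lm v) := by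
  choose w hw using fun p => Ideal.Quotient.mk_surjective (I := I) (v p)
  exact ⟨Lm w, det_Lm w, by rw [map_Lm, show (⇑(Ideal.Quotient.mk I)) ∘ w = v from funext hw]⟩

lemma lifts_Um {k : ℕ} (v : Fin k → R ⧸ I) : Lifts I (Um v) := by
  choose w hw using fun p => Ideal.Quotient.mk_surjective (I := I) (v p)
  exact ⟨Um w, det_Um w, by rw [map_Um, show (⇑(Ideal.Quotient.mk I)) ∘ w = v from funext hw]⟩

lemma key {R : Type*} [CommRing R] (I : Ideal R) (husc : _root_.UnitalSetCondition I) :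
    ∀ (k : ℕ) (M : Matrix (Fin k) (Fin k) (R ⧸ I)), M.det = 1 → Lifts I M := by
  intro k
  induction k with
  | zero =>
    intro M _
    exact ⟨1, Matrix.det_one, by ext i j; exact i.elim0⟩
  | succ k IH =>
    intro M hM
    rcases Nat.eq_zero_or_pos k with rfl | hk
    · refine ⟨1, Matrix.det_one, ?_⟩
      have h00 : M 0 0 = 1 := (Matrix.det_fin_one M).symm.trans hM
      ext i j
      fin_cases i; fin_cases j
      simpa [Matrix.one_apply] using h00.symm
    · -- main case
      have hfs : Function.Surjective (Ideal.Quotient.mk I) := Ideal.Quotient.mk_surjective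
      set A : Matrix (Fin (k+1)) (Fin (k+1)) R :=
        Matrix.of (fun i j => (hfs (M i j)).choose) with hAdef
      have hA : ∀ i j, Ideal.Quotient.mk I (A i j) = M i j := fun i j => (hfs (M i j)).choose_spec
      have hAmap : A.map (Ideal.Quotient.mk I) = M := by ext i j; exact hA i j
      have hdetA : Ideal.Quotient.mk I A.det = 1 := by
        rw [RingHom.map_det, RingHom.mapMatrix_apply, hAmap, hM]
      set t : R := 1 - A.det with ht_def
      have ht : t ∈ I := by
        have h : Ideal.Quotient.mk I t = 0 := by simp [ht_def, hdetA]
        rwa [Ideal.Quotient.eq_zero_iff_mem] at h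
      set g : Fin (k + 1) → R := Fin.cons t (fun j : Fin k => A 0 j.succ) with hg
      set a : Fin (k + 2) → R := Fin.cases (A 0 0) g with ha
      have ha0 : a 0 = A 0 0 := by rw [ha]; simp
      have hasucc : ∀ i : Fin (k+1), a i.succ = g i := fun i => by rw [ha]; simp
      have hsingle : ∀ i : Fin (k+2), Ideal.span {a i} ≤ ∑ i, Ideal.span {a i} := fun i =>
        Finset.single_le_sum (f := fun i => Ideal.span {a i}) (fun j _ => bot_le)
          (Finset.mem_univ i)
      have hdet_mem : A.det ∈ Ideal.span (Set.range (A 0)) := by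
        rw [Matrix.det_succ_row_zero]
        refine Ideal.sum_mem _ fun j _ => ?_
        exact Ideal.mul_mem_right _ _ (Ideal.mul_mem_left _ _ (Ideal.subset_span ⟨j, rfl⟩))
      have htop : ∑ i, Ideal.span {a i} = ⊤ := by
        rw [Ideal.eq_top_iff_one]
        have h1 : (1 : R) = A.det + t := by rw [ht_def]; ring
        rw [h1]
        refine add_mem ?_ ?_
        · refine (Ideal.span_le.mpr ?_) hdet_mem
          rintro x ⟨l, rfl⟩
          rcases Fin.eq_zero_or_eq_succ l with rfl | ⟨p, rfl⟩
          · exact hsingle 0 (by rw [ha0]; exact Ideal.subset_span rfl)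
          · refine hsingle p.succ.succ ?_
            have h2 : a p.succ.succ = A 0 p.succ := by rw [hasucc, hg]; simp
            rw [h2]; exact Ideal.subset_span rfl
        · refine hsingle ((0 : Fin (k+1)).succ) ?_
          have h2 : a (0 : Fin (k+1)).succ = t := by rw [hasucc, hg]; simp
          rw [h2]; exact Ideal.subset_span rfl
      obtain ⟨b, hb, hu⟩ := husc (k+2) (by omega) a htop
      have himg : a '' {i : Fin (k+2) | (i : ℕ) ≠ 0} = Set.range g := by
        ext x
        constructor
        · rintro ⟨i, hi, rfl⟩
          rcases Fin.eq_zero_or_eq_succ i with rfl | ⟨p, rfl⟩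
          · simp at hi
          · exact ⟨p, (hasucc p).symm⟩
        · rintro ⟨p, rfl⟩
          exact ⟨p.succ, by simp, hasucc p⟩
      rw [himg, ← Ideal.submodule_span_eq] at hb
      obtain ⟨c, hc⟩ := (Submodule.mem_span_range_iff_exists_fun R).mp hb
      rw [Fin.sum_univ_succ] at hc
      simp only [hg, Fin.cons_zero, Fin.cons_succ, smul_eq_mul] at hc
      set M₁ : Matrix (Fin (k+1)) (Fin (k+1)) (R ⧸ I) :=
        M * Lm (fun p => Ideal.Quotient.mk I (c p.succ)) with hM₁def
      have hM₁00 : M₁ 0 0 = Ideal.Quotient.mk I (A 0 0 + b) := by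
        rw [hM₁def, mul_Lm_zero, ← hc]
        simp [hA, Ideal.Quotient.eq_zero_iff_mem.mpr ht]
      have hu1 : IsUnit (M₁ 0 0) := by
        rw [hM₁00]
        have h2 : (⟨0, by omega⟩ : Fin (k+2)) = 0 := rfl
        rw [h2, ha0] at hu
        exact hu
      obtain ⟨uu, huu⟩ := hu1
      set i0 : Fin k := ⟨0, hk⟩ with hi0
      set lam : R ⧸ I := (↑uu⁻¹ : R ⧸ I) * (1 - M₁ 0 0 - M₁ i0.succ 0) with hlam_def
      set X : Matrix (Fin (k+1)) (Fin (k+1)) (R ⧸ I) := Lm (Pi.single i0 lam) * M₁ with hXdef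
      set M₂ : Matrix (Fin (k+1)) (Fin (k+1)) (R ⧸ I) :=
        Um (Pi.single i0 (1 : R ⧸ I)) * X with hM₂def
      have hX0 : ∀ j, X 0 j = M₁ 0 j := fun j => by rw [hXdef, Lm_mul_zero]
      have hXi0 : ∀ j, X i0.succ j = M₁ i0.succ j + lam * M₁ 0 j := fun j => by
        rw [hXdef, Lm_mul_succ, Pi.single_eq_same]
      have hM₂0 : ∀ j, M₂ 0 j = X 0 j + X i0.succ j := by
        intro j
        rw [hM₂def, Um_mul_zero]
        congr 1
        rw [Finset.sum_eq_single i0]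
        · rw [Pi.single_eq_same, one_mul]
        · intro p _ hp; rw [Pi.single_eq_of_ne hp, zero_mul]
        · intro h; exact absurd (Finset.mem_univ i0) h
      have hM₂00 : M₂ 0 0 = 1 := by
        rw [hM₂0 0, hX0, hXi0]
        have hlam : lam * M₁ 0 0 = 1 - M₁ 0 0 - M₁ i0.succ 0 := by
          rw [hlam_def, ← huu, mul_comm, ← mul_assoc, Units.mul_inv, one_mul]
        rw [hlam]; ring
      set M₃ : Matrix (Fin (k+1)) (Fin (k+1)) (R ⧸ I) :=
        Lm (fun p : Fin k => - M₂ p.succ 0) * M₂ with hM₃def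
      have hM₃0 : ∀ j, M₃ 0 j = M₂ 0 j := fun j => by rw [hM₃def, Lm_mul_zero]
      have hM₃s0 : ∀ p : Fin k, M₃ p.succ 0 = 0 := fun p => by
        rw [hM₃def, Lm_mul_succ, hM₂00]; ring
      have hM₃00 : M₃ 0 0 = 1 := (hM₃0 0).trans hM₂00
      set M₄ : Matrix (Fin (k+1)) (Fin (k+1)) (R ⧸ I) :=
        M₃ * Um (fun p : Fin k => - M₃ 0 p.succ) with hM₄def
      have hM₄00 : M₄ 0 0 = 1 := by rw [hM₄def, mul_Um_zero]; exact hM₃00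
      have hM₄s0 : ∀ p : Fin k, M₄ p.succ 0 = 0 := fun p => by
        rw [hM₄def, mul_Um_zero]; exact hM₃s0 p
      have hM₄0s : ∀ p : Fin k, M₄ 0 p.succ = 0 := fun p => by
        rw [hM₄def, mul_Um_succ, hM₃00]; ring
      have hdet₄ : M₄.det = 1 := by
        rw [hM₄def, hM₃def, hM₂def, hXdef, hM₁def]
        simp [Matrix.det_mul, det_Lm, det_Um, hM]
      have hdetB : (M₄.submatrix Fin.succ Fin.succ).det = 1 := by
        have h := Matrix.det_succ_row_zero M₄
        rw [Fin.sum_univ_succ] at h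
        simp only [Fin.val_zero, pow_zero, one_mul, hM₄00, Fin.succAbove_zero, hM₄0s,
          mul_zero, zero_mul, Finset.sum_const_zero, add_zero] at h
        rw [← h]; exact hdet₄
      obtain ⟨N', hdN', hmN'⟩ := IH _ hdetB
      set N₄ : Matrix (Fin (k+1)) (Fin (k+1)) R := Matrix.of (fun i j =>
        Fin.cases (Fin.cases (1 : R) (fun _ => 0) j) (fun p => Fin.cases 0 (fun q => N' p q) j) i)
        with hN₄def
      have hN00 : N₄ 0 0 = 1 := by rw [hN₄def]; simp
      have hN0s : ∀ q : Fin k, N₄ 0 q.succ = 0 := fun q => by rw [hN₄def]; simp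
      have hNs0 : ∀ p : Fin k, N₄ p.succ 0 = 0 := fun p => by rw [hN₄def]; simp
      have hNss : ∀ (p q : Fin k), N₄ p.succ q.succ = N' p q := fun p q => by rw [hN₄def]; simp
      have hsub : N₄.submatrix Fin.succ Fin.succ = N' := by
        ext p q; rw [Matrix.submatrix_apply]; exact hNss p q
      have hdetN₄ : N₄.det = 1 := by
        have h := Matrix.det_succ_row_zero N₄
        rw [Fin.sum_univ_succ] at h
        simp only [Fin.val_zero, pow_zero, one_mul, hN00, Fin.succAbove_zero, hN0s,
          mul_zero, zero_mul, Finset.sum_const_zero, add_zero] at h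
        rw [h, hsub, hdN']
      have hmapN₄ : N₄.map (Ideal.Quotient.mk I) = M₄ := by
        have hmN'' : ∀ p q, Ideal.Quotient.mk I (N' p q) = M₄ p.succ q.succ := by
          intro p q
          have h2 := Matrix.ext_iff.mpr hmN' p q
          simpa [Matrix.map_apply, Matrix.submatrix_apply] using h2
        ext i j
        rcases Fin.eq_zero_or_eq_succ i with rfl | ⟨p, rfl⟩ <;>
          rcases Fin.eq_zero_or_eq_succ j with rfl | ⟨q, rfl⟩
        · rw [Matrix.map_apply, hN00, _root_.map_one, hM₄00]
        · rw [Matrix.map_apply, hN0s, map_zero, hM₄0s]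
        · rw [Matrix.map_apply, hNs0, map_zero, hM₄s0]
        · rw [Matrix.map_apply, hNss]; exact hmN'' p q
      have l4 : Lifts I M₄ := ⟨N₄, hdetN₄, hmapN₄⟩
      have l3 : Lifts I M₃ := lifts_of_mul_right (hM₄def ▸ l4) (lifts_Um _)
      have l2 : Lifts I M₂ := lifts_of_mul_left (hM₃def ▸ l3) (lifts_Lm _)
      have lX : Lifts I X := lifts_of_mul_left (hM₂def ▸ l2) (lifts_Um _)
      have l1 : Lifts I M₁ := lifts_of_mul_left (hXdef ▸ lX) (lifts_Lm _)
      exact lifts_of_mul_right (hM₁def ▸ l1) (lifts_Lm _)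

end SLSurjAux

/-- Let `R` be a commutative ring with unity, `k ∈ ℕ`, and `I ⊊ R` an ideal
satisfying the unital set condition. Then the reduction map `SL_k(R) → SL_k(R/I)` is
surjective. -/
theorem sl_reduction_surjective {R : Type*} [CommRing R] (k : ℕ) (I : Ideal R) (hI : I ≠ ⊤)
    (husc : UnitalSetCondition I) :
    Function.Surjective
      (Matrix.SpecialLinearGroup.map (n := Fin k) (Ideal.Quotient.mk I) :
        Matrix.SpecialLinearGroup (Fin k) R → Matrix.SpecialLinearGroup (Fin k) (R ⧸ I)) := by
  intro Mbar
  obtain ⟨N, hdN, hmN⟩ := SLSurjAux.key I husc k (Mbar : Matrix (Fin k) (Fin k) (R ⧸ I)) Mbar.2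
  refine ⟨⟨N, hdN⟩, ?_⟩
  apply Subtype.ext
  show N.map (Ideal.Quotient.mk I) = _
  exact hmN
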